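/- Let S be a complete pre-Hilbert space (Hilbert space) and suppose (x_γ) is a net in the unit ball of S such that for every y ∈ S the net of lines span{x_γ + y} o-converges to {0} in the poset P(S) of finite/cofinite dimensional subspaces. Then a contradiction arises; i.e., no such net exists when S is complete. Equivalently: if such a net exists, S is incomplete. -/

import Mathlib

/-- The poset `P(S)` of finite/cofinite dimensional subspaces of a pre-Hilbert space. -/
def finCofinSubspaces (𝕜 S : Type*) [RCLike 𝕜] [NormedAddCommGroup S]
    [InnerProductSpace 𝕜 S] : Set (Submodule 𝕜 S) :=
  {M | FiniteDimensional 𝕜 M ∨ ∃ N : Submodule 𝕜 S, FiniteDimensional 𝕜 N ∧ M = Nᗮ}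

/-- If `S` is a complete pre-Hilbert space (Hilbert space) and `(x_γ)` is a net in the
unit ball of `S` such that for every `y ∈ S` the net of lines `span{x_γ + y}` o-converges
to `{0}` in `P(S)` (i.e. there is a decreasing net `(A_γ)` in `P(S)` with `⋂ A_γ = {0}`
and `span{x_γ + y} ⊆ A_γ`), then a contradiction arises: no such net exists. -/
theorem no_escaping_net_in_complete_space {𝕜 S : Type*} [RCLike 𝕜]
    [NormedAddCommGroup S] [InnerProductSpace 𝕜 S] [CompleteSpace S] [Nontrivial S]
    {Γ : Type*} [Preorder Γ] [IsDirected Γ (· ≤ ·)] [Nonempty Γ]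
    (x : Γ → S) (hx : ∀ γ, ‖x γ‖ ≤ 1)
    (h : ∀ y : S, ∃ A : Γ → Submodule 𝕜 S,
      (∀ γ, A γ ∈ finCofinSubspaces 𝕜 S) ∧ Antitone A ∧
        (⋂ γ, (A γ : Set S)) = {0} ∧ ∀ γ, (𝕜 ∙ (x γ + y)) ≤ A γ) :
    False := by
  classical
  -- An ultrafilter refining atTop on the directed set Γ
  have hdir : (Filter.atTop : Filter Γ).NeBot := Filter.atTop_neBot_iff.mpr ⟨‹_›, ‹_›⟩
  obtain ⟨U, hU⟩ := Filter.exists_ultrafilter_le (Filter.atTop : Filter Γ)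
  -- For every z, the net ⟪x γ, z⟫ has a limit along U (by compactness in 𝕜)
  have key : ∀ z : S, ∃ cz : 𝕜,
      Filter.Tendsto (fun γ => (inner 𝕜 (x γ) z : 𝕜)) U (nhds cz) := by
    intro z
    have hcomp : IsCompact (Metric.closedBall (0 : 𝕜) ‖z‖) := isCompact_closedBall _ _
    have hle : (Ultrafilter.map (fun γ => (inner 𝕜 (x γ) z : 𝕜)) U : Filter 𝕜) ≤
        Filter.principal (Metric.closedBall 0 ‖z‖) := by
      rw [Filter.le_principal_iff]
      refine Filter.mem_map.mpr (Filter.univ_mem' fun γ => ?_)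
      simp only [Set.mem_preimage, Metric.mem_closedBall, dist_zero_right]
      calc ‖(inner 𝕜 (x γ) z : 𝕜)‖ ≤ ‖x γ‖ * ‖z‖ := norm_inner_le_norm _ _
        _ ≤ 1 * ‖z‖ := by gcongr; exact hx γ
        _ = ‖z‖ := one_mul _
    obtain ⟨cz, _, hcz⟩ := hcomp.ultrafilter_le_nhds _ hle
    exact ⟨cz, hcz⟩
  choose c hc using key
  -- c is linear and bounded
  have hadd : ∀ z₁ z₂ : S, c (z₁ + z₂) = c z₁ + c z₂ := by
    intro z₁ z₂
    have h1 : Filter.Tendsto (fun γ => (inner 𝕜 (x γ) z₁ : 𝕜) + inner 𝕜 (x γ) z₂) U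
        (nhds (c z₁ + c z₂)) := (hc z₁).add (hc z₂)
    have h2 := hc (z₁ + z₂)
    simp only [inner_add_right] at h2
    exact tendsto_nhds_unique h2 h1
  have hsmul : ∀ (a : 𝕜) (z : S), c (a • z) = a * c z := by
    intro a z
    have h1 : Filter.Tendsto (fun γ => a * (inner 𝕜 (x γ) z : 𝕜)) U (nhds (a * c z)) :=
      (hc z).const_mul a
    have h2 := hc (a • z)
    simp only [inner_smul_right] at h2
    exact tendsto_nhds_unique h2 h1
  have hbound : ∀ z : S, ‖c z‖ ≤ 1 * ‖z‖ := by
    intro z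
    have hn : Filter.Tendsto (fun γ => ‖(inner 𝕜 (x γ) z : 𝕜)‖) U (nhds ‖c z‖) := (hc z).norm
    refine le_of_tendsto hn (Filter.Eventually.of_forall fun γ => ?_)
    calc ‖(inner 𝕜 (x γ) z : 𝕜)‖ ≤ ‖x γ‖ * ‖z‖ := norm_inner_le_norm _ _
      _ ≤ 1 * ‖z‖ := by gcongr; exact hx γ
  let f : S →ₗ[𝕜] 𝕜 :=
    { toFun := c, map_add' := hadd, map_smul' := hsmul }
  let F : S →L[𝕜] 𝕜 := f.mkContinuous 1 hbound
  -- Riesz representation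
  set w : S := (InnerProductSpace.toDual 𝕜 S).symm F with hwdef
  have hwz : ∀ z : S, (inner 𝕜 w z : 𝕜) = c z := by
    intro z
    have := InnerProductSpace.toDual_symm_apply (𝕜 := 𝕜) (E := S) (x := z) (y := F)
    exact this
  -- main claim: w + y = 0 for all y
  have main : ∀ y : S, w + y = 0 := by
    intro y
    obtain ⟨A, hAmem, hAanti, hAint, hAspan⟩ := h y
    have hmem : ∀ γ, w + y ∈ A γ := by
      intro γ
      have hrep : ∃ M : Submodule 𝕜 S, A γ = Mᗮ := by
        rcases hAmem γ with hfin | ⟨N, _, hN⟩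
        · haveI : FiniteDimensional 𝕜 (A γ) := hfin
          haveI : CompleteSpace (A γ) := FiniteDimensional.complete 𝕜 _
          exact ⟨(A γ)ᗮ, (Submodule.orthogonal_orthogonal (A γ)).symm⟩
        · exact ⟨N, hN⟩
      obtain ⟨M, hM⟩ := hrep
      rw [hM, Submodule.mem_orthogonal]
      intro m hm
      -- the net ⟪x γ' + y, m⟫ is eventually 0 along U
      have hev : ∀ᶠ γ' in (U : Filter Γ), (inner 𝕜 (x γ' + y) m : 𝕜) = 0 := by
        refine hU ?_
        filter_upwards [Filter.eventually_ge_atTop γ] with γ' hγ'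
        have hx' : x γ' + y ∈ A γ :=
          hAanti hγ' (hAspan γ' (Submodule.mem_span_singleton_self _))
        rw [hM, Submodule.mem_orthogonal] at hx'
        have h0 := hx' m hm
        rw [← inner_conj_symm, h0, map_zero]
      have hlim : Filter.Tendsto (fun γ' => (inner 𝕜 (x γ' + y) m : 𝕜)) U
          (nhds ((inner 𝕜 (w + y) m : 𝕜))) := by
        simp only [inner_add_left]
        exact ((hwz m ▸ hc m).add tendsto_const_nhds)
      have hlim0 : Filter.Tendsto (fun γ' => (inner 𝕜 (x γ' + y) m : 𝕜)) U (nhds 0) :=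
        Filter.Tendsto.congr' (hev.mono fun γ' hγ' => hγ'.symm) tendsto_const_nhds
      have hz : (inner 𝕜 (w + y) m : 𝕜) = 0 := tendsto_nhds_unique hlim hlim0
      rw [← inner_conj_symm, hz, map_zero]
    have hin : w + y ∈ (⋂ γ, (A γ : Set S)) := Set.mem_iInter.mpr hmem
    rw [hAint] at hin
    exact hin
  obtain ⟨v, hv⟩ := exists_ne (0 : S)
  have h0 := main 0
  have h1 := main (-v)
  rw [add_zero] at h0
  rw [h0, zero_add, neg_eq_zero] at h1
  exact hv h1
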